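/- Let f, g : ℝ^N → [0,∞) with f, g continuous on ℝ^N \ {0} and integrable on ℝ^N. Suppose (1+|x|)^α e^{β|x|} g(x) → γ ∈ [0,∞) as |x| → ∞, and f(x) ≤ C exp(−(β+η)|x|) for all |x| ≥ 1, where α ≥ 0, β ≥ 0, η > 0. Then (1+r)^α e^{βr} ∫_{ℝ^N} g(rω − y) f(y) dy → γ ∫_{ℝ^N} f(y) e^{β ω·y} dy as r → ∞, uniformly in ω on the unit sphere. -/

import Mathlib

open Real MeasureTheory Filter Topology

private lemma aux_bdd (a b : ℝ) (ha : 0 ≤ a) (hb : 0 < b) :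
    ∃ M : ℝ, 0 ≤ M ∧ ∀ t : ℝ, 0 ≤ t → (1 + t) ^ a * Real.exp (-b * t) ≤ M := by
  have h := tendsto_rpow_mul_exp_neg_mul_atTop_nhds_zero a b hb
  obtain ⟨T, hT⟩ := (h.eventually_lt_const one_pos).exists_forall_of_atTop
  set T' := max T 1 with hT'def
  have hT'1 : (1:ℝ) ≤ T' := le_max_right _ _
  refine ⟨max (Real.exp b) (T' ^ a), le_trans (Real.exp_pos b).le (le_max_left _ _),
    fun t ht => ?_⟩
  rcases le_or_gt T' (1 + t) with hu | hu
  · have h1 : (1 + t) ^ a * Real.exp (-b * (1 + t)) < 1 :=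
      hT (1 + t) (le_trans (le_max_left T 1) hu)
    have h2 : (1 + t) ^ a * Real.exp (-b * t) =
        ((1 + t) ^ a * Real.exp (-b * (1 + t))) * Real.exp b := by
      rw [mul_assoc, ← Real.exp_add]; ring_nf
    rw [h2]
    calc ((1 + t) ^ a * Real.exp (-b * (1 + t))) * Real.exp b
        ≤ 1 * Real.exp b := by
          apply mul_le_mul_of_nonneg_right h1.le (Real.exp_pos b).le
      _ = Real.exp b := one_mul _
      _ ≤ max (Real.exp b) (T' ^ a) := le_max_left _ _
  · have h1 : (1 + t) ^ a ≤ T' ^ a :=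
      Real.rpow_le_rpow (by linarith) hu.le ha
    have h2 : Real.exp (-b * t) ≤ 1 := by
      rw [Real.exp_le_one_iff]; nlinarith
    calc (1 + t) ^ a * Real.exp (-b * t) ≤ T' ^ a * 1 := by
          apply mul_le_mul h1 h2 (Real.exp_pos _).le (Real.rpow_nonneg (by linarith) _)
      _ = T' ^ a := mul_one _
      _ ≤ max (Real.exp b) (T' ^ a) := le_max_right _ _

set_option maxHeartbeats 2000000 in
theorem stmt9 (N : ℕ) (hN : 1 ≤ N)
    (f g : EuclideanSpace ℝ (Fin N) → ℝ)
    (hf0 : ∀ x, 0 ≤ f x) (hg0 : ∀ x, 0 ≤ g x)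
    (hfc : ContinuousOn f {x | x ≠ 0}) (hgc : ContinuousOn g {x | x ≠ 0})
    (hfi : Integrable f) (hgi : Integrable g)
    (α β η γ C : ℝ) (hα : 0 ≤ α) (hβ : 0 ≤ β) (hη : 0 < η) (hγ : 0 ≤ γ)
    (hglim : ∀ ε > 0, ∃ R : ℝ, ∀ x : EuclideanSpace ℝ (Fin N), R ≤ ‖x‖ →
      |(1 + ‖x‖) ^ α * Real.exp (β * ‖x‖) * g x - γ| ≤ ε)
    (hfdec : ∀ x : EuclideanSpace ℝ (Fin N), 1 ≤ ‖x‖ →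
      f x ≤ C * Real.exp (-(β + η) * ‖x‖)) :
    ∀ ε > 0, ∃ R : ℝ, ∀ r ≥ R, ∀ ω : EuclideanSpace ℝ (Fin N), ‖ω‖ = 1 →
      |(1 + r) ^ α * Real.exp (β * r) * (∫ y, g (r • ω - y) * f y)
        - γ * ∫ y, f y * Real.exp (β * (inner ℝ ω y : ℝ))| ≤ ε := by
  classical
  -- a unit vector
  have he0 : ∃ e : EuclideanSpace ℝ (Fin N), ‖e‖ = 1 :=
    ⟨EuclideanSpace.single (⟨0, hN⟩ : Fin N) (1:ℝ), by simp [EuclideanSpace.norm_single]⟩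
  obtain ⟨e₀, he₀⟩ := he0
  -- C is nonnegative
  have hC : 0 ≤ C := by
    have h1 := hf0 e₀
    have h2 := hfdec e₀ (by rw [he₀])
    nlinarith [Real.exp_pos (-(β + η) * ‖e₀‖)]
  -- The global bound Kmax on (1+|x|)^α e^{β|x|} g(x) for |x| ≥ 1
  obtain ⟨R₀, hR₀⟩ := hglim 1 one_pos
  set R₁ : ℝ := max R₀ 1 with hR₁def
  have hR₁1 : (1:ℝ) ≤ R₁ := le_max_right _ _
  set S : Set (EuclideanSpace ℝ (Fin N)) := Metric.closedBall 0 R₁ \ Metric.ball 0 1 with hSdef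
  have hScomp : IsCompact S := (isCompact_closedBall _ _).diff Metric.isOpen_ball
  have hSsub : S ⊆ {x : EuclideanSpace ℝ (Fin N) | x ≠ 0} := by
    intro x hx
    have h1 : ¬ (dist x 0 < 1) := fun h => hx.2 (Metric.mem_ball.2 h)
    have : 1 ≤ ‖x‖ := by rwa [dist_zero_right, not_lt] at h1
    intro h0; rw [h0] at this; simp at this; linarith
  obtain ⟨K, hK⟩ := hScomp.exists_bound_of_continuousOn (hgc.mono hSsub)
  have hK0 : 0 ≤ K := by
    have he₀S : e₀ ∈ S := by
      constructor
      · rw [Metric.mem_closedBall, dist_zero_right, he₀]; exact hR₁1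
      · rw [Metric.mem_ball, dist_zero_right, he₀]; exact lt_irrefl 1
    exact le_trans (norm_nonneg _) (hK e₀ he₀S)
  set Kmax : ℝ := max (γ + 1) ((1 + R₁) ^ α * Real.exp (β * R₁) * K) with hKmaxdef
  have hKmax0 : 0 ≤ Kmax := le_trans (by linarith) (le_max_left _ _)
  have hKmax : ∀ x : EuclideanSpace ℝ (Fin N), 1 ≤ ‖x‖ →
      (1 + ‖x‖) ^ α * Real.exp (β * ‖x‖) * g x ≤ Kmax := by
    intro x hx
    rcases le_or_gt R₁ ‖x‖ with h | h
    · have h1 := hR₀ x (le_trans (le_max_left R₀ 1) h)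
      have h2 := (abs_le.1 h1).2
      exact le_trans (by linarith) (le_max_left _ _)
    · have hxS : x ∈ S := by
        constructor
        · rw [Metric.mem_closedBall, dist_zero_right]; exact h.le
        · rw [Metric.mem_ball, dist_zero_right, not_lt]; exact hx
      have hgx : g x ≤ K := le_trans (le_abs_self _) (hK x hxS)
      have h1 : (1 + ‖x‖) ^ α ≤ (1 + R₁) ^ α :=
        Real.rpow_le_rpow (by positivity) (by linarith) hα
      have h2 : Real.exp (β * ‖x‖) ≤ Real.exp (β * R₁) :=
        Real.exp_le_exp.2 (by nlinarith)
      calc (1 + ‖x‖) ^ α * Real.exp (β * ‖x‖) * g x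
          ≤ (1 + R₁) ^ α * Real.exp (β * R₁) * K := by
            apply mul_le_mul (mul_le_mul h1 h2 (Real.exp_pos _).le (by positivity)) hgx
              (hg0 x) (by positivity)
        _ ≤ Kmax := le_max_right _ _
  -- Integrability of the dominating function D₁
  set D₁ : EuclideanSpace ℝ (Fin N) → ℝ := fun y => (1 + ‖y‖) ^ α * Real.exp (β * ‖y‖) * f y with hD₁def
  have hD₁nonneg : ∀ y, 0 ≤ D₁ y := fun y => by
    have := hf0 y; positivity
  have hD₁meas : AEStronglyMeasurable D₁ volume := by
    apply AEStronglyMeasurable.mul _ hfi.1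
    apply Continuous.aestronglyMeasurable
    apply Continuous.mul
    · exact (continuous_const.add continuous_norm).rpow_const (fun x => Or.inr hα)
    · exact Real.continuous_exp.comp (continuous_const.mul continuous_norm)
  have hIntExp : Integrable (fun y : EuclideanSpace ℝ (Fin N) => Real.exp (-(η/2) * ‖y‖)) := by
    obtain ⟨M, hM0, hM⟩ := aux_bdd ((N:ℝ)+1) (η/2) (by positivity) (by positivity)
    apply Integrable.mono' ((integrable_one_add_norm
      (μ := volume) (r := (N:ℝ)+1) (by rw [finrank_euclideanSpace_fin]; linarith)).const_mul M)
    · exact (Real.continuous_exp.comp (continuous_const.mul continuous_norm)).aestronglyMeasurable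
    · filter_upwards with y
      rw [Real.norm_eq_abs, abs_of_nonneg (Real.exp_pos _).le]
      have h1 := hM ‖y‖ (norm_nonneg y)
      have h2 : (0:ℝ) < (1 + ‖y‖) ^ ((N:ℝ)+1) := Real.rpow_pos_of_pos (by positivity) _
      have h3 : (1 + ‖y‖) ^ (-((N:ℝ)+1)) = ((1 + ‖y‖) ^ ((N:ℝ)+1))⁻¹ :=
        Real.rpow_neg (by positivity) _
      rw [h3, mul_comm M, ← div_eq_inv_mul, le_div_iff₀ h2]
      nlinarith
  obtain ⟨M₂, hM₂0, hM₂⟩ := aux_bdd α (η/2) hα (by positivity)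
  have hD₁int : Integrable D₁ := by
    set B : EuclideanSpace ℝ (Fin N) → ℝ := fun y =>
      (Metric.closedBall (0:EuclideanSpace ℝ (Fin N)) 1).indicator (fun y => 2 ^ α * Real.exp β * f y) y
        + (C * M₂) * Real.exp (-(η/2) * ‖y‖) with hBdef
    have hBint : Integrable B := by
      apply Integrable.add
      · exact ((hfi.const_mul _).indicator measurableSet_closedBall)
      · exact hIntExp.const_mul _
    apply Integrable.mono' hBint hD₁meas
    filter_upwards with y
    rw [Real.norm_eq_abs, abs_of_nonneg (hD₁nonneg y)]
    rcases le_or_gt ‖y‖ 1 with hy | hy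
    · have hmem : y ∈ Metric.closedBall (0:EuclideanSpace ℝ (Fin N)) 1 := by
        rw [Metric.mem_closedBall, dist_zero_right]; exact hy
      rw [hBdef]
      simp only [Set.indicator_of_mem hmem]
      have h1 : (1 + ‖y‖) ^ α ≤ 2 ^ α :=
        Real.rpow_le_rpow (by positivity) (by linarith) hα
      have h2 : Real.exp (β * ‖y‖) ≤ Real.exp β :=
        Real.exp_le_exp.2 (by nlinarith)
      have h3 : D₁ y ≤ 2 ^ α * Real.exp β * f y := by
        simp only [hD₁def]
        apply mul_le_mul (mul_le_mul h1 h2 (Real.exp_pos _).le (by positivity)) le_rfl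
          (hf0 y) (by positivity)
      have h4 : 0 ≤ (C * M₂) * Real.exp (-(η/2) * ‖y‖) := by positivity
      linarith
    · have hmem : y ∉ Metric.closedBall (0:EuclideanSpace ℝ (Fin N)) 1 := by
        rw [Metric.mem_closedBall, dist_zero_right]; linarith
      rw [hBdef]
      simp only [Set.indicator_of_notMem hmem, zero_add]
      have hfy : f y ≤ C * Real.exp (-(β + η) * ‖y‖) := hfdec y hy.le
      have h1 : D₁ y ≤ (1 + ‖y‖) ^ α * Real.exp (β * ‖y‖) * (C * Real.exp (-(β + η) * ‖y‖)) := by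
        simp only [hD₁def]
        apply mul_le_mul_of_nonneg_left hfy (by positivity)
      have hexp : Real.exp (β * ‖y‖) * Real.exp (-(β + η) * ‖y‖)
          = Real.exp (-(η/2) * ‖y‖) * Real.exp (-(η/2) * ‖y‖) := by
        rw [← Real.exp_add, ← Real.exp_add]; congr 1; ring
      have h2 : (1 + ‖y‖) ^ α * Real.exp (β * ‖y‖) * (C * Real.exp (-(β + η) * ‖y‖))
          = C * ((1 + ‖y‖) ^ α * Real.exp (-(η/2) * ‖y‖)) * Real.exp (-(η/2) * ‖y‖) := by
        linear_combination ((1 + ‖y‖) ^ α * C) * hexp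
      have h3 : (1 + ‖y‖) ^ α * Real.exp (-(η/2) * ‖y‖) ≤ M₂ := hM₂ ‖y‖ (norm_nonneg y)
      calc D₁ y ≤ C * ((1 + ‖y‖) ^ α * Real.exp (-(η/2) * ‖y‖)) * Real.exp (-(η/2) * ‖y‖) := by
            rw [← h2]; exact h1
        _ ≤ C * M₂ * Real.exp (-(η/2) * ‖y‖) := by
            apply mul_le_mul_of_nonneg_right _ (Real.exp_pos _).le
            apply mul_le_mul_of_nonneg_left h3 hC
  -- proof by contradiction
  by_contra hcon
  push_neg at hcon
  obtain ⟨ε, hε, hseq⟩ := hcon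
  choose r hr ω hω hbig using fun n : ℕ => hseq ((n:ℝ) + 2)
  obtain ⟨w, hwmem, φ, hφmono, hφtend⟩ :=
    (isCompact_sphere (0 : EuclideanSpace ℝ (Fin N)) 1).tendsto_subseq
      (x := ω) (fun n => by rw [mem_sphere_zero_iff_norm]; exact hω n)
  have hwnorm : ‖w‖ = 1 := mem_sphere_zero_iff_norm.1 hwmem
  set R : ℕ → ℝ := fun n => r (φ n) with hRdef
  set W : ℕ → EuclideanSpace ℝ (Fin N) := fun n => ω (φ n) with hWdef
  have hWnorm : ∀ n : ℕ, ‖W n‖ = 1 := fun n => hω (φ n)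
  have hWtend : Tendsto W atTop (𝓝 w) := hφtend
  have hRge : ∀ n : ℕ, (n:ℝ) + 2 ≤ R n := fun n => by
    have h1 : (n:ℝ) ≤ (φ n : ℝ) := by exact_mod_cast hφmono.le_apply
    have h2 := hr (φ n)
    simp only [hRdef]; linarith
  have hR2 : ∀ n : ℕ, (2:ℝ) ≤ R n := fun n => le_trans (by have := Nat.cast_nonneg (α := ℝ) n; linarith) (hRge n)
  have hR0 : ∀ n : ℕ, (0:ℝ) ≤ R n := fun n => le_trans (by norm_num) (hR2 n)
  have hRtop : Tendsto R atTop atTop :=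
    tendsto_atTop_mono (fun n => le_trans (by linarith) (hRge n)) tendsto_natCast_atTop_atTop
  set x : ℕ → EuclideanSpace ℝ (Fin N) := fun n => R n • W n with hxdef
  have hxnorm : ∀ n : ℕ, ‖x n‖ = R n := fun n => by
    simp only [hxdef, norm_smul, Real.norm_eq_abs, abs_of_nonneg (hR0 n), hWnorm n, mul_one]
  set c : ℕ → ℝ := fun n => (1 + R n) ^ α * Real.exp (β * R n) with hcdef
  have hc0 : ∀ n : ℕ, 0 ≤ c n := fun n => by
    have := hR0 n
    simp only [hcdef]; positivity
  set In : ℕ → EuclideanSpace ℝ (Fin N) → ℝ :=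
    fun n y => c n * (g (x n - y) * f y) with hIndef
  -- the key domination estimate on the good region
  have hdom : ∀ (n : ℕ) (y : EuclideanSpace ℝ (Fin N)), 1 ≤ ‖x n - y‖ →
      c n * g (x n - y) ≤ Kmax * ((1 + ‖y‖) ^ α * Real.exp (β * ‖y‖)) := by
    intro n y hz
    set z := x n - y with hzdef
    have hz1 := hKmax z hz
    have hrle : R n ≤ ‖z‖ + ‖y‖ := by
      have h1 : ‖x n‖ ≤ ‖z‖ + ‖y‖ := by
        have : z + y = x n := by simp [hzdef]
        calc ‖x n‖ = ‖z + y‖ := by rw [this]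
          _ ≤ ‖z‖ + ‖y‖ := norm_add_le _ _
      rwa [hxnorm n] at h1
    have h1 : (1 + R n) ^ α ≤ (1 + ‖z‖) ^ α * (1 + ‖y‖) ^ α := by
      rw [← Real.mul_rpow (by positivity) (by positivity)]
      apply Real.rpow_le_rpow (by have := hR0 n; positivity) _ hα
      nlinarith [norm_nonneg z, norm_nonneg y]
    have h2 : Real.exp (β * R n) ≤ Real.exp (β * ‖z‖) * Real.exp (β * ‖y‖) := by
      rw [← Real.exp_add]
      apply Real.exp_le_exp.2
      nlinarith
    calc c n * g z
        ≤ ((1 + ‖z‖) ^ α * (1 + ‖y‖) ^ α) * (Real.exp (β * ‖z‖) * Real.exp (β * ‖y‖)) * g z := by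
          apply mul_le_mul_of_nonneg_right _ (hg0 z)
          simp only [hcdef]
          apply mul_le_mul h1 h2 (Real.exp_pos _).le (by positivity)
      _ = ((1 + ‖y‖) ^ α * Real.exp (β * ‖y‖)) * ((1 + ‖z‖) ^ α * Real.exp (β * ‖z‖) * g z) := by
          ring
      _ ≤ ((1 + ‖y‖) ^ α * Real.exp (β * ‖y‖)) * Kmax := by
          apply mul_le_mul_of_nonneg_left hz1 (by positivity)
      _ = Kmax * ((1 + ‖y‖) ^ α * Real.exp (β * ‖y‖)) := by ring
  have hgsub : ∀ n : ℕ, Integrable (fun y => g (x n - y)) := fun n => hgi.comp_sub_left (x n)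
  have hInmeas : ∀ n : ℕ, AEStronglyMeasurable (In n) volume := fun n => by
    exact ((hgsub n).1.mul hfi.1).const_mul _
  set κ : ℕ → ℝ := fun n => c n * (C * Real.exp (-(β + η) * (R n - 1))) with hκdef
  have hκ0 : ∀ n : ℕ, 0 ≤ κ n := fun n => by
    have := hc0 n
    simp only [hκdef]; positivity
  -- pointwise bound valid everywhere
  have hybig : ∀ (n : ℕ) (y : EuclideanSpace ℝ (Fin N)), ‖x n - y‖ < 1 → R n - 1 ≤ ‖y‖ := by
    intro n y h
    have h1 : ‖x n‖ - ‖x n - y‖ ≤ ‖y‖ := by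
      have h2 : ‖x n‖ - ‖x n - y‖ ≤ ‖x n - (x n - y)‖ := norm_sub_norm_le _ _
      simpa using h2
    rw [hxnorm n] at h1; linarith
  have hptB : ∀ (n : ℕ) (y : EuclideanSpace ℝ (Fin N)), ‖x n - y‖ < 1 →
      In n y ≤ κ n * g (x n - y) := by
    intro n y h
    have hy1 : R n - 1 ≤ ‖y‖ := hybig n y h
    have hy2 : 1 ≤ ‖y‖ := le_trans (by linarith [hR2 n]) hy1
    have hf1 : f y ≤ C * Real.exp (-(β + η) * (R n - 1)) := by
      calc f y ≤ C * Real.exp (-(β + η) * ‖y‖) := hfdec y hy2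
        _ ≤ C * Real.exp (-(β + η) * (R n - 1)) := by
          apply mul_le_mul_of_nonneg_left _ hC
          apply Real.exp_le_exp.2
          nlinarith
    simp only [hIndef, hκdef]
    calc c n * (g (x n - y) * f y)
        ≤ c n * (g (x n - y) * (C * Real.exp (-(β + η) * (R n - 1)))) := by
          apply mul_le_mul_of_nonneg_left _ (hc0 n)
          exact mul_le_mul_of_nonneg_left hf1 (hg0 _)
      _ = c n * (C * Real.exp (-(β + η) * (R n - 1))) * g (x n - y) := by ring
  have hpt : ∀ (n : ℕ) (y : EuclideanSpace ℝ (Fin N)),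
      In n y ≤ Kmax * D₁ y + κ n * g (x n - y) := by
    intro n y
    rcases le_or_gt 1 ‖x n - y‖ with h | h
    · have h1 : In n y ≤ Kmax * D₁ y := by
        have h2 := mul_le_mul_of_nonneg_right (hdom n y h) (hf0 y)
        simp only [hIndef, hD₁def]
        calc c n * (g (x n - y) * f y) = c n * g (x n - y) * f y := by ring
          _ ≤ Kmax * ((1 + ‖y‖) ^ α * Real.exp (β * ‖y‖)) * f y := h2
          _ = Kmax * ((1 + ‖y‖) ^ α * Real.exp (β * ‖y‖) * f y) := by ring
      have h2 : 0 ≤ κ n * g (x n - y) := mul_nonneg (hκ0 n) (hg0 _)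
      linarith
    · have h1 : In n y ≤ κ n * g (x n - y) := hptB n y h
      have h2 : 0 ≤ Kmax * D₁ y := mul_nonneg hKmax0 (hD₁nonneg y)
      linarith
  have hIn0 : ∀ (n : ℕ) (y : EuclideanSpace ℝ (Fin N)), 0 ≤ In n y := fun n y => by
    simp only [hIndef]
    exact mul_nonneg (hc0 n) (mul_nonneg (hg0 _) (hf0 y))
  have hIn_int : ∀ n : ℕ, Integrable (In n) := fun n => by
    apply Integrable.mono' ((hD₁int.const_mul Kmax).add ((hgsub n).const_mul (κ n))) (hInmeas n)
    filter_upwards with y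
    rw [Real.norm_eq_abs, abs_of_nonneg (hIn0 n y)]
    exact hpt n y
  set G : ℕ → Set (EuclideanSpace ℝ (Fin N)) := fun n => {y | 1 ≤ ‖x n - y‖} with hGdef
  have hGmeas : ∀ n : ℕ, MeasurableSet (G n) := fun n =>
    measurableSet_le measurable_const ((continuous_const.sub continuous_id).norm.measurable)
  set H : ℕ → EuclideanSpace ℝ (Fin N) → ℝ := fun n => (G n).indicator (In n) with hHdef
  have hptG : ∀ (n : ℕ) (y : EuclideanSpace ℝ (Fin N)), 1 ≤ ‖x n - y‖ →
      In n y ≤ Kmax * D₁ y := by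
    intro n y h
    have h2 := mul_le_mul_of_nonneg_right (hdom n y h) (hf0 y)
    simp only [hIndef, hD₁def]
    calc c n * (g (x n - y) * f y) = c n * g (x n - y) * f y := by ring
      _ ≤ Kmax * ((1 + ‖y‖) ^ α * Real.exp (β * ‖y‖)) * f y := h2
      _ = Kmax * ((1 + ‖y‖) ^ α * Real.exp (β * ‖y‖) * f y) := by ring
  have hslb : ∀ (n : ℕ) (y : EuclideanSpace ℝ (Fin N)), R n - ‖y‖ ≤ ‖x n - y‖ := by
    intro n y
    have h := norm_sub_norm_le (x n) y
    rw [hxnorm n] at h; linarith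
  -- the pointwise limit
  have hHy : ∀ y : EuclideanSpace ℝ (Fin N),
      Tendsto (fun n => H n y) atTop (𝓝 (γ * Real.exp (β * (inner ℝ w y : ℝ)) * f y)) := by
    intro y
    have hstop : Tendsto (fun n => ‖x n - y‖) atTop atTop := by
      apply tendsto_atTop_mono (fun n => hslb n y)
      have h := tendsto_atTop_add_const_right atTop (-‖y‖) hRtop
      simpa [sub_eq_add_neg] using h
    have hu : Tendsto (fun n => (1 + ‖x n - y‖) ^ α * Real.exp (β * ‖x n - y‖) * g (x n - y))
        atTop (𝓝 γ) := by
      rw [Metric.tendsto_atTop]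
      intro ε' hε'
      obtain ⟨R', hR'⟩ := hglim (ε'/2) (by linarith)
      obtain ⟨n₀, hn₀⟩ := (hstop.eventually_ge_atTop R').exists_forall_of_atTop
      exact ⟨n₀, fun n hn => by
        rw [Real.dist_eq]; exact lt_of_le_of_lt (hR' _ (hn₀ n hn)) (by linarith)⟩
    have hcy : Tendsto (fun n => (inner ℝ (W n) y : ℝ)) atTop (𝓝 (inner ℝ w y : ℝ)) :=
      ((Continuous.inner continuous_id continuous_const).tendsto w).comp hWtend
    have habs : ∀ n : ℕ, |R n - ‖x n - y‖| ≤ ‖y‖ := by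
      intro n
      have h := abs_norm_sub_norm_le (x n) (x n - y)
      rw [hxnorm n] at h
      simpa [sub_sub_cancel] using h
    have hs2 : ∀ n : ℕ, ‖x n - y‖^2 = R n^2 - 2 * R n * (inner ℝ (W n) y : ℝ) + ‖y‖^2 := by
      intro n
      have h1 : ‖x n - y‖^2 = ‖x n‖^2 - 2 * (inner ℝ (x n) y : ℝ) + ‖y‖^2 := by
        exact_mod_cast norm_sub_sq_real (x n) y
      have h2 : (inner ℝ (x n) y : ℝ) = R n * (inner ℝ (W n) y : ℝ) := by
        simp only [hxdef]
        exact real_inner_smul_left _ _ _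
      rw [hxnorm n, h2] at h1; linarith
    have hbd : ∀ n : ℕ, |(R n - ‖x n - y‖) - (inner ℝ (W n) y : ℝ)| ≤ 2 * ‖y‖^2 / R n := by
      intro n
      have hden : (0:ℝ) < R n := lt_of_lt_of_le two_pos (hR2 n)
      have hs0 : (0:ℝ) ≤ ‖x n - y‖ := norm_nonneg _
      have hden2 : (0:ℝ) < R n + ‖x n - y‖ := by linarith
      have hid : ((R n - ‖x n - y‖) - (inner ℝ (W n) y : ℝ)) * (R n + ‖x n - y‖)
          = (inner ℝ (W n) y : ℝ) * (R n - ‖x n - y‖) - ‖y‖^2 := by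
        linear_combination -(hs2 n)
      have hcc : |(inner ℝ (W n) y : ℝ)| ≤ ‖y‖ := by
        have h := abs_real_inner_le_norm (W n) y
        rwa [hWnorm n, one_mul] at h
      rw [le_div_iff₀ hden]
      calc |(R n - ‖x n - y‖) - (inner ℝ (W n) y : ℝ)| * R n
          ≤ |(R n - ‖x n - y‖) - (inner ℝ (W n) y : ℝ)| * (R n + ‖x n - y‖) := by
            apply mul_le_mul_of_nonneg_left (by linarith) (abs_nonneg _)
        _ = |((R n - ‖x n - y‖) - (inner ℝ (W n) y : ℝ)) * (R n + ‖x n - y‖)| := by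
            rw [abs_mul, abs_of_pos hden2]
        _ = |(inner ℝ (W n) y : ℝ) * (R n - ‖x n - y‖) - ‖y‖^2| := by rw [hid]
        _ ≤ |(inner ℝ (W n) y : ℝ) * (R n - ‖x n - y‖)| + ‖y‖^2 := by
            have h6 := abs_add_le ((inner ℝ (W n) y : ℝ) * (R n - ‖x n - y‖)) (-(‖y‖^2))
            rw [abs_neg, abs_of_nonneg (sq_nonneg (‖y‖))] at h6
            simpa [sub_eq_add_neg] using h6
        _ ≤ 2 * ‖y‖^2 := by
            rw [abs_mul]
            nlinarith [habs n, hcc, abs_nonneg ((inner ℝ (W n) y : ℝ)),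
              abs_nonneg (R n - ‖x n - y‖)]
    have ht0 : Tendsto (fun n => (R n - ‖x n - y‖) - (inner ℝ (W n) y : ℝ)) atTop (𝓝 0) := by
      have hbnd : Tendsto (fun n => 2 * ‖y‖^2 / R n) atTop (𝓝 0) :=
        Tendsto.div_atTop tendsto_const_nhds hRtop
      apply squeeze_zero_norm _ hbnd
      intro n
      rw [Real.norm_eq_abs]
      exact hbd n
    have ht : Tendsto (fun n => R n - ‖x n - y‖) atTop (𝓝 (inner ℝ w y : ℝ)) := by
      have h := ht0.add hcy
      rw [zero_add] at h
      exact h.congr (fun n => by ring)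
    have hs1 : Tendsto (fun n => 1 + ‖x n - y‖) atTop atTop :=
      tendsto_atTop_add_const_left atTop 1 hstop
    have hinv : Tendsto (fun n => (1 + ‖x n - y‖)⁻¹) atTop (𝓝 0) := hs1.inv_tendsto_atTop
    have hmul : Tendsto (fun n => (R n - ‖x n - y‖) * (1 + ‖x n - y‖)⁻¹) atTop (𝓝 0) := by
      have hbnd2 : Tendsto (fun n => ‖y‖ * (1 + ‖x n - y‖)⁻¹) atTop (𝓝 0) := by
        have h := hinv.const_mul ‖y‖
        simpa using h
      apply squeeze_zero_norm _ hbnd2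
      intro n
      have hpos : (0:ℝ) ≤ (1 + ‖x n - y‖)⁻¹ := by positivity
      rw [Real.norm_eq_abs, abs_mul, abs_inv, abs_of_nonneg (by positivity : (0:ℝ) ≤ 1 + ‖x n - y‖)]
      exact mul_le_mul_of_nonneg_right (habs n) hpos
    have hv : Tendsto (fun n => (1 + R n)/(1 + ‖x n - y‖)) atTop (𝓝 1) := by
      have h := (tendsto_const_nhds (x := (1:ℝ)) (f := atTop)).add hmul
      rw [add_zero] at h
      apply h.congr (fun n => ?_)
      have hne : (1:ℝ) + ‖x n - y‖ ≠ 0 := by positivity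
      rw [eq_div_iff hne]
      field_simp
      try ring
    have hq : Tendsto (fun n => ((1 + R n)/(1 + ‖x n - y‖)) ^ α
        * Real.exp (β * (R n - ‖x n - y‖))) atTop
        (𝓝 (Real.exp (β * (inner ℝ w y : ℝ)))) := by
      have h1 := hv.rpow_const (Or.inr hα)
      have h2 : Tendsto (fun n => Real.exp (β * (R n - ‖x n - y‖))) atTop
          (𝓝 (Real.exp (β * (inner ℝ w y : ℝ)))) :=
        (Real.continuous_exp.tendsto _).comp (ht.const_mul β)
      have h := h1.mul h2
      rwa [Real.one_rpow, one_mul] at h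
    have hceq : ∀ n : ℕ, c n = ((1 + ‖x n - y‖) ^ α * Real.exp (β * ‖x n - y‖))
        * (((1 + R n)/(1 + ‖x n - y‖)) ^ α * Real.exp (β * (R n - ‖x n - y‖))) := by
      intro n
      have hpos : (0:ℝ) < 1 + ‖x n - y‖ := by positivity
      have hRpos : (0:ℝ) ≤ 1 + R n := by have := hR0 n; linarith
      rw [Real.div_rpow hRpos hpos.le, mul_sub, Real.exp_sub]
      have hne1 : (1 + ‖x n - y‖) ^ α ≠ 0 := (Real.rpow_pos_of_pos hpos α).ne'
      have hne2 : Real.exp (β * ‖x n - y‖) ≠ 0 := Real.exp_ne_zero _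
      simp only [hcdef]
      field_simp
      try ring
    have hlim : Tendsto (fun n => In n y) atTop
        (𝓝 (γ * Real.exp (β * (inner ℝ w y : ℝ)) * f y)) := by
      have h := (hu.mul hq).mul_const (f y)
      apply h.congr (fun n => ?_)
      simp only [hIndef]
      rw [hceq n]; ring
    apply hlim.congr'
    filter_upwards [hstop.eventually_ge_atTop 1] with n hn
    have hy : y ∈ G n := hn
    simp only [hHdef]
    exact (Set.indicator_of_mem hy (In n)).symm
  -- dominated convergence for the good part
  have hDCT1 : Tendsto (fun n => ∫ y, H n y) atTop
      (𝓝 (∫ y, γ * Real.exp (β * (inner ℝ w y : ℝ)) * f y)) := by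
    apply tendsto_integral_of_dominated_convergence (fun y => Kmax * D₁ y)
    · exact fun n => (hInmeas n).indicator (hGmeas n)
    · exact hD₁int.const_mul Kmax
    · intro n
      filter_upwards with y
      rw [Real.norm_eq_abs]
      rcases em (y ∈ G n) with hy | hy
      · simp only [hHdef, Set.indicator_of_mem hy]
        rw [abs_of_nonneg (hIn0 n y)]
        exact hptG n y hy
      · simp only [hHdef, Set.indicator_of_notMem hy]
        rw [abs_zero]
        exact mul_nonneg hKmax0 (hD₁nonneg y)
    · filter_upwards with y
      exact hHy y
  -- splitting of the integral and the bad part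
  have hindint : ∀ n : ℕ, Integrable ((G n).indicator (In n)) := fun n =>
    (hIn_int n).indicator (hGmeas n)
  have hindcint : ∀ n : ℕ, Integrable ((G n)ᶜ.indicator (In n)) := fun n =>
    (hIn_int n).indicator (hGmeas n).compl
  have hsplit : ∀ n : ℕ, (∫ y, In n y) = (∫ y, H n y) + ∫ y, (G n)ᶜ.indicator (In n) y := by
    intro n
    have h : ∀ y, In n y = (G n).indicator (In n) y + (G n)ᶜ.indicator (In n) y := fun y =>
      (congrFun (Set.indicator_self_add_compl (G n) (In n)) y).symm
    calc (∫ y, In n y) = ∫ y, ((G n).indicator (In n) y + (G n)ᶜ.indicator (In n) y) :=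
        integral_congr_ae (Filter.Eventually.of_forall h)
      _ = (∫ y, (G n).indicator (In n) y) + ∫ y, (G n)ᶜ.indicator (In n) y :=
        integral_add (hindint n) (hindcint n)
  have hbadle : ∀ n : ℕ, (∫ y, (G n)ᶜ.indicator (In n) y) ≤ κ n * ∫ y, g y := by
    intro n
    have hle : ∀ y, (G n)ᶜ.indicator (In n) y ≤ κ n * g (x n - y) := by
      intro y
      rcases em (y ∈ (G n)ᶜ) with hy | hy
      · rw [Set.indicator_of_mem hy]
        apply hptB n y
        have hy' : ¬ (1 ≤ ‖x n - y‖) := hy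
        linarith [not_le.1 hy']
      · rw [Set.indicator_of_notMem hy]
        exact mul_nonneg (hκ0 n) (hg0 _)
    calc (∫ y, (G n)ᶜ.indicator (In n) y) ≤ ∫ y, κ n * g (x n - y) :=
        integral_mono (hindcint n) ((hgsub n).const_mul (κ n)) hle
      _ = κ n * ∫ y, g (x n - y) := integral_const_mul _ _
      _ = κ n * ∫ y, g y := by rw [integral_sub_left_eq_self g volume (x n)]
  have hbad0 : ∀ n : ℕ, 0 ≤ ∫ y, (G n)ᶜ.indicator (In n) y := fun n =>
    integral_nonneg (fun y => Set.indicator_nonneg (fun y _ => hIn0 n y) y)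
  have hκtend : Tendsto (fun n => κ n * ∫ y, g y) atTop (𝓝 0) := by
    have h1 := tendsto_rpow_mul_exp_neg_mul_atTop_nhds_zero α η hη
    have h2 : Tendsto (fun n : ℕ => 1 + R n) atTop atTop :=
      tendsto_atTop_add_const_left atTop 1 hRtop
    have h3 : Tendsto (fun n : ℕ => (1 + R n) ^ α * Real.exp (-η * (1 + R n))) atTop (𝓝 0) := by
      have h := h1.comp h2
      simpa [Function.comp_def] using h
    have h4 := h3.const_mul ((C * Real.exp (β + 2*η)) * ∫ y, g y)
    rw [mul_zero] at h4
    apply h4.congr (fun n => ?_)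
    have hexp : Real.exp (β + 2*η) * Real.exp (-η * (1 + R n))
        = Real.exp (β * R n) * Real.exp (-(β + η) * (R n - 1)) := by
      rw [← Real.exp_add, ← Real.exp_add]; congr 1; ring
    simp only [hκdef, hcdef]
    linear_combination ((1 + R n) ^ α * C * ∫ y, g y) * hexp
  have hbadtend : Tendsto (fun n => ∫ y, (G n)ᶜ.indicator (In n) y) atTop (𝓝 0) :=
    squeeze_zero hbad0 hbadle hκtend
  have hInteq : ∀ n : ℕ,
      (1 + R n) ^ α * Real.exp (β * R n) * (∫ y, g (x n - y) * f y) = ∫ y, In n y := by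
    intro n
    have h : (∫ y, In n y) = c n * ∫ y, g (x n - y) * f y := by
      simp only [hIndef]
      exact integral_const_mul _ _
    rw [h]
  have hA : Tendsto (fun n => (1 + R n) ^ α * Real.exp (β * R n) * (∫ y, g (x n - y) * f y))
      atTop (𝓝 (∫ y, γ * Real.exp (β * (inner ℝ w y : ℝ)) * f y)) := by
    have h := hDCT1.add hbadtend
    rw [add_zero] at h
    apply h.congr (fun n => ?_)
    rw [hInteq n]
    exact (hsplit n).symm
  -- convergence of the target integrals
  have hL : Tendsto (fun n => ∫ y, f y * Real.exp (β * (inner ℝ (W n) y : ℝ))) atTop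
      (𝓝 (∫ y, f y * Real.exp (β * (inner ℝ w y : ℝ)))) := by
    apply tendsto_integral_of_dominated_convergence D₁
    · intro n
      apply hfi.1.mul
      apply Continuous.aestronglyMeasurable
      exact Real.continuous_exp.comp
        (continuous_const.mul (Continuous.inner continuous_const continuous_id))
    · exact hD₁int
    · intro n
      filter_upwards with y
      rw [Real.norm_eq_abs, abs_mul, abs_of_nonneg (hf0 y), abs_of_nonneg (Real.exp_pos _).le]
      have h1 : (inner ℝ (W n) y : ℝ) ≤ ‖y‖ := by
        have h := real_inner_le_norm (W n) y
        rwa [hWnorm n, one_mul] at h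
      have h2 : Real.exp (β * (inner ℝ (W n) y : ℝ)) ≤ Real.exp (β * ‖y‖) :=
        Real.exp_le_exp.2 (by nlinarith)
      have h3 : 1 ≤ (1 + ‖y‖) ^ α := Real.one_le_rpow (by linarith [norm_nonneg y]) hα
      simp only [hD₁def]
      calc f y * Real.exp (β * (inner ℝ (W n) y : ℝ)) ≤ f y * Real.exp (β * ‖y‖) :=
          mul_le_mul_of_nonneg_left h2 (hf0 y)
        _ ≤ (1 + ‖y‖) ^ α * Real.exp (β * ‖y‖) * f y := by
            nlinarith [mul_nonneg (sub_nonneg.2 h3)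
              (mul_nonneg (hf0 y) (Real.exp_pos (β * ‖y‖)).le)]
    · filter_upwards with y
      have hcy : Tendsto (fun n => (inner ℝ (W n) y : ℝ)) atTop (𝓝 (inner ℝ w y : ℝ)) :=
        ((Continuous.inner continuous_id continuous_const).tendsto w).comp hWtend
      exact tendsto_const_nhds.mul ((Real.continuous_exp.tendsto _).comp (hcy.const_mul β))
  have hB : Tendsto (fun n => γ * ∫ y, f y * Real.exp (β * (inner ℝ (W n) y : ℝ))) atTop
      (𝓝 (γ * ∫ y, f y * Real.exp (β * (inner ℝ w y : ℝ)))) := hL.const_mul γ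
  have hgoaleq : (∫ y, γ * Real.exp (β * (inner ℝ w y : ℝ)) * f y)
      = γ * ∫ y, f y * Real.exp (β * (inner ℝ w y : ℝ)) := by
    rw [← integral_const_mul]
    apply integral_congr_ae
    filter_upwards with y
    ring
  have hfinal : Tendsto (fun n =>
      (1 + R n) ^ α * Real.exp (β * R n) * (∫ y, g (x n - y) * f y)
        - γ * ∫ y, f y * Real.exp (β * (inner ℝ (W n) y : ℝ))) atTop (𝓝 0) := by
    have h := hA.sub hB
    rw [hgoaleq, sub_self] at h
    exact h
  rw [Metric.tendsto_atTop] at hfinal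
  obtain ⟨n₀, hn₀⟩ := hfinal ε hε
  have hcontr := hbig (φ n₀)
  have h := hn₀ n₀ le_rfl
  rw [Real.dist_eq, sub_zero] at h
  simp only [hRdef, hWdef, hxdef] at h
  linarith
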